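/- arXiv:2007.15915 — 2 statements merged into one kernel-verified Lean document; each statement's English description precedes it below -/
import Mathlib

section
/- Let S be a trace-free symmetric endomorphism of ℝ³ with tr(S²)³ = 6·tr(S³)² and tr(S³) ≠ 0. Then the eigenspace of S corresponding to the double eigenvalue −tr(S³)/tr(S²) is two-dimensional, and the eigenspace for the simple eigenvalue 2·tr(S³)/tr(S²) is one-dimensional and orthogonal to it. -/
open Module Module.End Submodule

private lemma trace_eq_sum' (T : EuclideanSpace ℝ (Fin 3) →ₗ[ℝ] EuclideanSpace ℝ (Fin 3))
    (b : OrthonormalBasis (Fin 3) ℝ (EuclideanSpace ℝ (Fin 3))) (ν : Fin 3 → ℝ)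
    (h : ∀ i, T (b i) = ν i • b i) : LinearMap.trace ℝ _ T = ∑ i, ν i := by
  rw [LinearMap.trace_eq_matrix_trace ℝ b.toBasis, Matrix.trace]
  simp [Matrix.diag, LinearMap.toMatrix_apply, h]

private lemma core' {S : EuclideanSpace ℝ (Fin 3) →ₗ[ℝ] EuclideanSpace ℝ (Fin 3)}
    (hS : S.IsSymmetric)
    (b : OrthonormalBasis (Fin 3) ℝ (EuclideanSpace ℝ (Fin 3)))
    (μ : Fin 3 → ℝ) (hb : ∀ i, S (b i) = μ i • b i)
    (i j k : Fin 3) (hij : i ≠ j)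
    (l : ℝ) (hl : l ≠ 0) (hi : μ i = l) (hj : μ j = l) (hk : μ k = -2*l) :
    finrank ℝ (eigenspace S l) = 2 ∧ finrank ℝ (eigenspace S (-2*l)) = 1 ∧
    eigenspace S (-2*l) ≤ (eigenspace S l)ᗮ := by
  have hbi : b i ∈ eigenspace S l := by rw [mem_eigenspace_iff, hb, hi]
  have hbj : b j ∈ eigenspace S l := by rw [mem_eigenspace_iff, hb, hj]
  have hbk : b k ∈ eigenspace S (-2*l) := by rw [mem_eigenspace_iff, hb, hk]
  have horth : eigenspace S (-2*l) ≤ (eigenspace S l)ᗮ := by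
    intro x hx
    rw [Submodule.mem_orthogonal]
    intro y hy
    rw [mem_eigenspace_iff] at hx hy
    have h1 := hS y x
    rw [hx, hy, real_inner_smul_left, real_inner_smul_right] at h1
    have : (3*l) * inner ℝ y x = 0 := by linarith
    rcases mul_eq_zero.mp this with h | h
    · exact absurd (by linarith : l = 0) hl
    · exact h
  have hdisj : Disjoint (eigenspace S l) (eigenspace S (-2*l)) :=
    (Submodule.orthogonal_disjoint (eigenspace S l)).mono_right horth
  have hli : LinearIndependent ℝ (fun t : Fin 2 => b (![i, j] t)) := by
    apply (b.toBasis.linearIndependent.comp ![i, j])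
    intro a c h
    fin_cases a <;> fin_cases c <;> simp_all
  have hspan : span ℝ (Set.range fun t : Fin 2 => b (![i, j] t)) ≤ eigenspace S l := by
    rw [span_le]
    rintro _ ⟨t, rfl⟩
    fin_cases t <;> simp [mem_eigenspace_iff, hb, hi, hj]
  have h2le : 2 ≤ finrank ℝ (eigenspace S l) := by
    have := finrank_span_eq_card hli
    calc 2 = finrank ℝ (span ℝ (Set.range fun t : Fin 2 => b (![i, j] t))) := by
            rw [this]; simp
      _ ≤ finrank ℝ (eigenspace S l) := Submodule.finrank_mono hspan
  have h1le : 1 ≤ finrank ℝ (eigenspace S (-2*l)) := by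
    have hbk0 : b k ≠ 0 := b.toBasis.ne_zero k
    rw [Nat.one_le_iff_ne_zero, ← Nat.pos_iff_ne_zero, Module.finrank_pos_iff_exists_ne_zero]
    exact ⟨⟨b k, hbk⟩, by simpa using hbk0⟩
  have hsum : finrank ℝ (eigenspace S l) + finrank ℝ (eigenspace S (-2*l)) ≤ 3 := by
    have := Submodule.finrank_sup_add_finrank_inf_eq (eigenspace S l) (eigenspace S (-2*l))
    rw [hdisj.eq_bot] at this
    simp at this
    rw [← this]
    have h3 := Submodule.finrank_le (eigenspace S l ⊔ eigenspace S (-2*l))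
    simpa using h3
  exact ⟨by omega, by omega, horth⟩

private lemma alg' (a b c : ℝ) (h : a + b + c = 0) :
    (a^2+b^2+c^2)^3 - 6*(a^3+b^3+c^3)^2 = 2*((a-b)*(b-c)*(c-a))^2 := by
  have hc : c = -a-b := by linarith
  subst hc; ring

theorem degenerate_tracefree_symmetric_eigenspaces
    (S : EuclideanSpace ℝ (Fin 3) →ₗ[ℝ] EuclideanSpace ℝ (Fin 3))
    (hS : S.IsSymmetric) (htr : LinearMap.trace ℝ _ S = 0)
    (IS JS : ℝ) (hIS : IS = LinearMap.trace ℝ _ (S ∘ₗ S))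
    (hJS : JS = LinearMap.trace ℝ _ (S ∘ₗ S ∘ₗ S))
    (hdeg : IS ^ 3 = 6 * JS ^ 2) (hJ0 : JS ≠ 0) :
    Module.finrank ℝ (Module.End.eigenspace S (-JS / IS)) = 2 ∧
    Module.finrank ℝ (Module.End.eigenspace S (2 * JS / IS)) = 1 ∧
    Module.End.eigenspace S (2 * JS / IS) ≤ (Module.End.eigenspace S (-JS / IS))ᗮ := by
  have hn : finrank ℝ (EuclideanSpace ℝ (Fin 3)) = 3 := by simp
  set b := hS.eigenvectorBasis hn with hbdef
  set μ := hS.eigenvalues hn with hmudef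
  have hb : ∀ i, S (b i) = μ i • b i := fun i => by
    exact_mod_cast hS.apply_eigenvectorBasis hn i
  have hb2 : ∀ i, (S ∘ₗ S) (b i) = (μ i ^ 2) • b i := fun i => by
    simp [LinearMap.comp_apply, hb, map_smul, smul_smul]; ring_nf
  have hb3 : ∀ i, (S ∘ₗ S ∘ₗ S) (b i) = (μ i ^ 3) • b i := fun i => by
    simp [LinearMap.comp_apply, hb, map_smul, smul_smul]; ring_nf
  have hT : μ 0 + μ 1 + μ 2 = 0 := by
    have := trace_eq_sum' S b μ hb
    rw [htr] at this
    rw [Fin.sum_univ_three] at this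
    linarith
  have hIs : IS = μ 0 ^ 2 + μ 1 ^ 2 + μ 2 ^ 2 := by
    rw [hIS, trace_eq_sum' _ b _ hb2, Fin.sum_univ_three]
  have hJs : JS = μ 0 ^ 3 + μ 1 ^ 3 + μ 2 ^ 3 := by
    rw [hJS, trace_eq_sum' _ b _ hb3, Fin.sum_univ_three]
  have hprod : (μ 0 - μ 1) * (μ 1 - μ 2) * (μ 2 - μ 0) = 0 := by
    have h1 := alg' (μ 0) (μ 1) (μ 2) hT
    rw [← hIs, ← hJs] at h1
    have h2 : ((μ 0 - μ 1) * (μ 1 - μ 2) * (μ 2 - μ 0))^2 = 0 := by linarith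
    exact pow_eq_zero_iff (n := 2) (by norm_num) |>.mp h2
  rcases mul_eq_zero.mp hprod with h | hca
  · rcases mul_eq_zero.mp h with hab | hbc
    · -- μ 0 = μ 1
      have heq : μ 0 = μ 1 := by linarith
      set l := μ 0 with hldef
      have hc : μ 2 = -2*l := by linarith
      have hISv : IS = 6*l^2 := by rw [hIs, hc, ← heq]; ring
      have hJSv : JS = -6*l^3 := by rw [hJs, hc, ← heq]; ring
      have hl : l ≠ 0 := fun h0 => hJ0 (by rw [hJSv, h0]; ring)
      have e1 : -JS/IS = l := by rw [hJSv, hISv]; field_simp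
      have e2 : 2*JS/IS = -2*l := by rw [hJSv, hISv]; field_simp
      rw [e1, e2]
      exact core' hS b μ hb 0 1 2 (by decide) l hl rfl heq.symm hc
    · -- μ 1 = μ 2
      have heq : μ 1 = μ 2 := by linarith
      set l := μ 1 with hldef
      have hc : μ 0 = -2*l := by linarith
      have hISv : IS = 6*l^2 := by rw [hIs, hc, ← heq]; ring
      have hJSv : JS = -6*l^3 := by rw [hJs, hc, ← heq]; ring
      have hl : l ≠ 0 := fun h0 => hJ0 (by rw [hJSv, h0]; ring)
      have e1 : -JS/IS = l := by rw [hJSv, hISv]; field_simp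
      have e2 : 2*JS/IS = -2*l := by rw [hJSv, hISv]; field_simp
      rw [e1, e2]
      exact core' hS b μ hb 1 2 0 (by decide) l hl rfl heq.symm hc
  · -- μ 2 = μ 0
    have heq : μ 2 = μ 0 := by linarith
    set l := μ 0 with hldef
    have hc : μ 1 = -2*l := by linarith
    have hISv : IS = 6*l^2 := by rw [hIs, hc, heq]; ring
    have hJSv : JS = -6*l^3 := by rw [hJs, hc, heq]; ring
    have hl : l ≠ 0 := fun h0 => hJ0 (by rw [hJSv, h0]; ring)
    have e1 : -JS/IS = l := by rw [hJSv, hISv]; field_simp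
    have e2 : 2*JS/IS = -2*l := by rw [hJSv, hISv]; field_simp
    rw [e1, e2]
    exact core' hS b μ hb 0 2 1 (by decide) l hl rfl heq hc
end

section
/- Let v be a nonzero vector in ℝ³ and R ∈ SO(3) with R v = v. If S is a symmetric trace-free 3×3 matrix satisfying R S Rᵀ = S for all rotations R about the axis v, then S = λ(I − 3 n nᵀ) for some λ ∈ ℝ, where n = v/|v|. -/
open Matrix

section Aux
variable (n : Fin 3 → ℝ)

private noncomputable def Kx (n : Fin 3 → ℝ) : Matrix (Fin 3) (Fin 3) ℝ :=
  !![0, -n 2, n 1; n 2, 0, -n 0; -n 1, n 0, 0]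

private lemma hPP (hu : n 0 ^ 2 + n 1 ^ 2 + n 2 ^ 2 = 1) :
    vecMulVec n n * vecMulVec n n = vecMulVec n n := by
  ext i j
  simp [Matrix.mul_apply, Fin.sum_univ_three, Matrix.vecMulVec_apply]
  linear_combination (n i * n j) * hu

private lemma hPt : (vecMulVec n n)ᵀ = vecMulVec n n := by
  ext i j; simp [Matrix.vecMulVec_apply, mul_comm]

private lemma hKt : (Kx n)ᵀ = -(Kx n) := by
  ext i j; fin_cases i <;> fin_cases j <;> simp [Kx]

private lemma hPK : vecMulVec n n * Kx n = 0 := by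
  ext i j
  fin_cases i <;> fin_cases j <;>
    simp [Kx, Matrix.mul_apply, Fin.sum_univ_three, Matrix.vecMulVec_apply] <;> ring

private lemma hKP : Kx n * vecMulVec n n = 0 := by
  ext i j
  fin_cases i <;> fin_cases j <;>
    simp [Kx, Matrix.mul_apply, Fin.sum_univ_three, Matrix.vecMulVec_apply] <;> ring

private lemma hKK (hu : n 0 ^ 2 + n 1 ^ 2 + n 2 ^ 2 = 1) :
    Kx n * Kx n = vecMulVec n n - 1 := by
  ext i j
  fin_cases i <;> fin_cases j <;>
    simp [Kx, Matrix.mul_apply, Fin.sum_univ_three, Matrix.vecMulVec_apply, Matrix.one_apply] <;>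
    linarith [hu]

private lemma hPn (hu : n 0 ^ 2 + n 1 ^ 2 + n 2 ^ 2 = 1) :
    vecMulVec n n *ᵥ n = n := by
  ext i
  simp [Matrix.mulVec, dotProduct, Fin.sum_univ_three, Matrix.vecMulVec_apply]
  linear_combination (n i) * hu

private lemma hKn : Kx n *ᵥ n = 0 := by
  ext i
  fin_cases i <;>
    simp [Kx, Matrix.mulVec, dotProduct, Fin.sum_univ_three] <;> ring

private lemma hPSP (S : Matrix (Fin 3) (Fin 3) ℝ) :
    vecMulVec n n * S * vecMulVec n n = (n ⬝ᵥ S *ᵥ n) • vecMulVec n n := by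
  ext i j
  simp [Matrix.mul_apply, Fin.sum_univ_three, Matrix.vecMulVec_apply, Matrix.mulVec,
    dotProduct]
  ring

private lemma traceP : (vecMulVec n n).trace = n 0 ^ 2 + n 1 ^ 2 + n 2 ^ 2 := by
  rw [Matrix.trace_fin_three]; simp [Matrix.vecMulVec_apply]; ring

private lemma detR2 (hu : n 0 ^ 2 + n 1 ^ 2 + n 2 ^ 2 = 1) :
    (vecMulVec n n + vecMulVec n n - 1).det = 1 := by
  rw [Matrix.det_fin_three]
  simp [Matrix.vecMulVec_apply, Matrix.one_apply]
  linear_combination 2 * hu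

private lemma detR1 (hu : n 0 ^ 2 + n 1 ^ 2 + n 2 ^ 2 = 1) :
    (vecMulVec n n + Kx n).det = 1 := by
  rw [Matrix.det_fin_three]
  simp [Kx, Matrix.vecMulVec_apply]
  linear_combination ((n 0 ^ 2 + n 1 ^ 2 + n 2 ^ 2) + 1) * hu

end Aux



private lemma skew_axis (n : Fin 3 → ℝ) (hu : n 0 ^ 2 + n 1 ^ 2 + n 2 ^ 2 = 1)
    (M : Matrix (Fin 3) (Fin 3) ℝ) (hsk : Mᵀ = -M) (hMn : M *ᵥ n = 0) :
    M = (-(M 0 1) * n 2 + (M 0 2) * n 1 - (M 1 2) * n 0) • Kx n := by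
  have sk : ∀ i j, M j i = -(M i j) := fun i j => congrFun (congrFun hsk i) j
  have z00 : M 0 0 = 0 := by linarith [sk 0 0]
  have z11 : M 1 1 = 0 := by linarith [sk 1 1]
  have z22 : M 2 2 = 0 := by linarith [sk 2 2]
  have a01 : M 1 0 = -(M 0 1) := sk 0 1
  have a02 : M 2 0 = -(M 0 2) := sk 0 2
  have a12 : M 2 1 = -(M 1 2) := sk 1 2
  have e0 : M 0 1 * n 1 + M 0 2 * n 2 = 0 := by
    have := congrFun hMn 0
    simp [Matrix.mulVec, dotProduct, Fin.sum_univ_three, z00] at this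
    linarith [this]
  have e1 : -(M 0 1) * n 0 + M 1 2 * n 2 = 0 := by
    have := congrFun hMn 1
    simp [Matrix.mulVec, dotProduct, Fin.sum_univ_three, z11, a01] at this
    linarith [this]
  have e2 : -(M 0 2) * n 0 - M 1 2 * n 1 = 0 := by
    have := congrFun hMn 2
    simp [Matrix.mulVec, dotProduct, Fin.sum_univ_three, z22, a02, a12] at this
    linarith [this]
  ext i j
  fin_cases i <;> fin_cases j <;> simp [Kx, z00, z11, z22, a01, a02, a12]
  · linear_combination (-(M 0 1)) * hu + n 1 * e0 - n 0 * e1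
  · linear_combination (-(M 0 2)) * hu + n 2 * e0 - n 0 * e2
  · linear_combination (M 0 1) * hu - n 1 * e0 + n 0 * e1
  · linear_combination (-(M 1 2)) * hu + n 2 * e1 - n 1 * e2
  · linear_combination (-(M 0 2)) * hu + n 2 * e0 - n 0 * e2
  · linear_combination (M 1 2) * hu - n 2 * e1 + n 1 * e2


theorem axially_invariant_tracefree_symmetric_is_LRS
    (v : Fin 3 → ℝ) (hv : v ≠ 0) (n : Fin 3 → ℝ)
    (hn : n = (Real.sqrt (v ⬝ᵥ v))⁻¹ • v)
    (S : Matrix (Fin 3) (Fin 3) ℝ) (hS : S.IsSymm) (htr : S.trace = 0)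
    (hinv : ∀ R : Matrix (Fin 3) (Fin 3) ℝ, R * Rᵀ = 1 → R.det = 1 → R.mulVec v = v →
      R * S * Rᵀ = S) :
    ∃ l : ℝ, S = l • ((1 : Matrix (Fin 3) (Fin 3) ℝ) - (3 : ℝ) • Matrix.vecMulVec n n) := by
  -- basic facts about n and v
  have hvv0 : v ⬝ᵥ v ≠ 0 := fun h => hv (dotProduct_self_eq_zero.mp h)
  have hvvnn : 0 ≤ v ⬝ᵥ v := Finset.sum_nonneg fun i _ => mul_self_nonneg _
  have hvv : 0 < v ⬝ᵥ v := lt_of_le_of_ne hvvnn (Ne.symm hvv0)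
  have hc : 0 < Real.sqrt (v ⬝ᵥ v) := Real.sqrt_pos.mpr hvv
  have hc2 : Real.sqrt (v ⬝ᵥ v) ^ 2 = v ⬝ᵥ v := Real.sq_sqrt hvv.le
  have hnn : n ⬝ᵥ n = 1 := by
    have key : ∀ c : ℝ, 0 < c → c⁻¹ * (c⁻¹ * c ^ 2) = 1 := by
      intro c hc0; field_simp
    rw [hn, smul_dotProduct, dotProduct_smul, smul_eq_mul, smul_eq_mul]
    nth_rewrite 3 [← hc2]
    exact key _ hc
  have hu : n 0 ^ 2 + n 1 ^ 2 + n 2 ^ 2 = 1 := by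
    simp [dotProduct, Fin.sum_univ_three] at hnn
    linear_combination hnn
  have hvcn : v = Real.sqrt (v ⬝ᵥ v) • n := by
    rw [hn, smul_smul, mul_inv_cancel₀ hc.ne', one_smul]
  -- opaque names for the projector and cross-product matrix
  obtain ⟨P, hPdef⟩ : ∃ P : Matrix (Fin 3) (Fin 3) ℝ, P = vecMulVec n n := ⟨_, rfl⟩
  obtain ⟨K, hKdef⟩ : ∃ K : Matrix (Fin 3) (Fin 3) ℝ, K = Kx n := ⟨_, rfl⟩
  have pp : P * P = P := by rw [hPdef]; exact hPP n hu
  have pt : Pᵀ = P := by rw [hPdef]; exact hPt n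
  have kt : Kᵀ = -K := by rw [hKdef]; exact hKt n
  have pk : P * K = 0 := by rw [hPdef, hKdef]; exact hPK n
  have kp : K * P = 0 := by rw [hPdef, hKdef]; exact hKP n
  have kk : K * K = P - 1 := by rw [hPdef, hKdef]; exact hKK n hu
  have pn : P *ᵥ n = n := by rw [hPdef]; exact hPn n hu
  have knv : K *ᵥ n = 0 := by rw [hKdef]; exact hKn n
  have psp : P * S * P = (n ⬝ᵥ S *ᵥ n) • P := by rw [hPdef]; exact hPSP n S
  have trp : P.trace = 1 := by rw [hPdef, traceP n, hu]
  have d2 : (P + P - 1).det = 1 := by rw [hPdef]; exact detR2 n hu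
  have d1 : (P + K).det = 1 := by rw [hPdef, hKdef]; exact detR1 n hu
  -- rotation by π about the axis
  have ht2 : (P + P - 1)ᵀ = P + P - 1 := by
    rw [Matrix.transpose_sub, Matrix.transpose_add, pt, Matrix.transpose_one]
  have o2 : (P + P - 1) * (P + P - 1)ᵀ = 1 := by
    rw [ht2]
    have e : (P + P - 1) * (P + P - 1)
        = P*P + P*P + P*P + P*P - P - P - P - P + 1 := by noncomm_ring
    rw [e, pp]; abel
  have v2 : (P + P - 1) *ᵥ v = v := by
    have hmn : (P + P - 1) *ᵥ n = n := by
      rw [Matrix.sub_mulVec, Matrix.add_mulVec, pn, Matrix.one_mulVec]; abel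
    rw [hvcn, Matrix.mulVec_smul, hmn]
  have h2 := hinv _ o2 d2 v2
  rw [ht2] at h2
  have r22 := o2
  rw [ht2] at r22
  have hcs : S * (P + P - 1) = (P + P - 1) * S := by
    conv_lhs => rw [← h2]
    rw [Matrix.mul_assoc, r22, Matrix.mul_one]
  have hsp2 : S*P + S*P = P*S + P*S := by
    have e1 : S * (P + P - 1) = S*P + S*P - S := by noncomm_ring
    have e2 : (P + P - 1) * S = P*S + P*S - S := by noncomm_ring
    rw [e1, e2] at hcs
    exact sub_left_inj.mp hcs
  have half : ∀ A B : Matrix (Fin 3) (Fin 3) ℝ, A + A = B + B → A = B := by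
    intro A B h
    have h2 : (2:ℝ) • A = (2:ℝ) • B := by rw [two_smul, two_smul]; exact h
    exact smul_right_injective _ two_ne_zero h2
  have hsp : S * P = P * S := half _ _ hsp2
  have hpsp : P * S * P = P * S := by
    rw [Matrix.mul_assoc, hsp, ← Matrix.mul_assoc, pp]
  -- rotation by π/2 about the axis
  have ht1 : (P + K)ᵀ = P - K := by
    rw [Matrix.transpose_add, pt, kt, sub_eq_add_neg]
  have o1 : (P + K) * (P + K)ᵀ = 1 := by
    rw [ht1]
    have e : (P + K) * (P - K) = P*P - P*K + (K*P - K*K) := by noncomm_ring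
    rw [e, pp, pk, kp, kk]; abel
  have v1 : (P + K) *ᵥ v = v := by
    have hmn : (P + K) *ᵥ n = n := by rw [Matrix.add_mulVec, pn, knv, add_zero]
    rw [hvcn, Matrix.mulVec_smul, hmn]
  have h1 := hinv _ o1 d1 v1
  rw [ht1] at h1
  have hPSK : P * S * K = 0 := by
    rw [← hsp, Matrix.mul_assoc, pk, Matrix.mul_zero]
  have hKSP : K * S * P = 0 := by
    rw [Matrix.mul_assoc, hsp, ← Matrix.mul_assoc, kp, Matrix.zero_mul]
  have star : P * S * P - K * S * K = S := by
    have e : (P + K) * S * (P - K) = P*S*P - P*S*K + (K*S*P - K*S*K) := by noncomm_ring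
    rw [e, hPSK, hKSP] at h1
    simpa [sub_eq_add_neg] using h1
  have hKS : K * S = S * K := by
    have h := congrArg (fun X => K * X) star
    simp only [Matrix.mul_sub, ← Matrix.mul_assoc] at h
    rw [kp, kk] at h
    simp only [Matrix.zero_mul, Matrix.sub_mul, Matrix.one_mul] at h
    rw [hPSK] at h
    simp only [zero_sub, zero_mul, Matrix.zero_mul, sub_neg_eq_add, zero_add] at h
    exact h.symm
  have skewM : (S*K)ᵀ = -(S*K) := by
    rw [Matrix.transpose_mul, kt, hS.eq, Matrix.neg_mul, hKS]
  have hMn0 : (S*K) *ᵥ n = 0 := by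
    rw [← Matrix.mulVec_mulVec, knv, Matrix.mulVec_zero]
  obtain ⟨t, hM⟩ : ∃ t : ℝ, S * K = t • K := by
    have h := skew_axis n hu (S*K) skewM hMn0
    rw [← hKdef] at h
    exact ⟨_, h⟩
  have hSK2 : S * (P - 1) = t • (P - 1) := by
    have h := congrArg (fun X => X * K) hM
    rw [Matrix.mul_assoc, smul_mul_assoc] at h
    simp only [kk] at h
    exact h
  have hSPa : S * P = (n ⬝ᵥ S *ᵥ n) • P := by rw [hsp, ← hpsp, psp]
  have hSfin : S = (n ⬝ᵥ S *ᵥ n) • P - (t • P - t • 1) := by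
    have h' : S * P - S = t • P - t • 1 := by
      have e : S * (P - 1) = S * P - S := by noncomm_ring
      have e2 : t • ((P:Matrix (Fin 3) (Fin 3) ℝ) - 1) = t • P - t • 1 := smul_sub t P 1
      rw [← e, ← e2]; exact hSK2
    rw [← h', hSPa]; abel
  have hα : (n ⬝ᵥ S *ᵥ n) = -2 * t := by
    have h := htr
    rw [hSfin] at h
    simp only [Matrix.trace_sub, Matrix.trace_smul, trp, Matrix.trace_one,
      Fintype.card_fin, smul_eq_mul, mul_one] at h
    push_cast at h
    linarith
  refine ⟨t, ?_⟩
  rw [hSfin, hα, ← hPdef]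
  module
end
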